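/- For every n ∈ ℤ and every β ∈ (−π, π], the Cauchy principal value (1/π) lim_{ε→0⁺} ∫_{{α ∈ (−π,π] : dist(α, β mod 2π) > ε}} e^{inα}/(e^{iα} − e^{iβ}) dα exists and equals e^{i(n−1)β} if n ≥ 1, and −e^{i(n−1)β} if n ≤ 0. -/

import Mathlib

open MeasureTheory Filter Set

noncomputable section

/-- The distance from `x` to `y` modulo `2π` (distance on the circle `ℝ/2πℤ`). -/
def circDist (x y : ℝ) : ℝ := ⨅ m : ℤ, |x - y + 2 * Real.pi * (m : ℝ)|

/-- The set `{α ∈ (-π, π] : dist(α, β mod 2π) > ε}`. -/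
def pvSet (β ε : ℝ) : Set ℝ := {α : ℝ | α ∈ Ioc (-Real.pi) Real.pi ∧ ε < circDist α β}

lemma circDist_bdd (x y : ℝ) : BddBelow (Set.range fun m : ℤ => |x - y + 2 * Real.pi * (m : ℝ)|) :=
  ⟨0, by rintro t ⟨m, rfl⟩; positivity⟩

lemma circDist_le (x y : ℝ) (m : ℤ) : circDist x y ≤ |x - y + 2 * Real.pi * (m : ℝ)| :=
  ciInf_le (circDist_bdd x y) m

lemma circDist_add_right (x y c : ℝ) : circDist (x + c) (y + c) = circDist x y := by
  unfold circDist
  congr 1; ext m; ring_nf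

lemma circDist_add_two_pi (x y : ℝ) : circDist (x + 2 * Real.pi) y = circDist x y := by
  unfold circDist
  have hs : Function.Surjective (fun m : ℤ => m - 1) := fun m => ⟨m + 1, by ring⟩
  rw [← hs.iInf_comp]
  congr 1; ext m
  push_cast
  ring_nf

lemma circDist_self_zero {θ : ℝ} (hθ : θ ∈ Ioc (-Real.pi) Real.pi) : circDist θ 0 = |θ| := by
  have hπ := Real.pi_pos
  refine le_antisymm (by simpa using circDist_le θ 0 0) (le_ciInf fun m => ?_)
  rcases eq_or_ne m 0 with rfl | hm
  · simp
  have h1 : (1:ℝ) ≤ |(m:ℝ)| := by exact_mod_cast Int.one_le_abs hm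
  have : 2 * Real.pi - |θ| ≤ |θ - 0 + 2 * Real.pi * m| := by
    have := abs_sub_abs_le_abs_sub (2 * Real.pi * m) (-(θ - 0))
    have h2 : 2 * Real.pi ≤ |2 * Real.pi * m| := by
      rw [abs_mul]
      rw [abs_of_pos (by positivity : (0:ℝ) < 2*Real.pi)]
      nlinarith [Real.pi_pos]
    rw [abs_neg] at this
    simp only [sub_zero] at this ⊢
    have : |2 * Real.pi * m| - |θ| ≤ |θ + 2 * Real.pi * m| := by
      have := abs_sub_abs_le_abs_sub (2 * Real.pi * m) (-θ)
      simpa [abs_neg, sub_neg_eq_add, add_comm] using this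
    linarith
  have hab : |θ| ≤ Real.pi := abs_le.2 ⟨le_of_lt hθ.1, hθ.2⟩
  linarith

def Dset (β ε : ℝ) : Set ℝ := {α : ℝ | ε < circDist α β}

lemma measurable_circDist (β : ℝ) : Measurable (fun α => circDist α β) :=
  Measurable.iInf fun m => (measurable_id.sub measurable_const |>.add measurable_const).abs

lemma measurableSet_Dset (β ε : ℝ) : MeasurableSet (Dset β ε) :=
  measurableSet_lt measurable_const (measurable_circDist β)

lemma Dset_mem_ge {β ε α : ℝ} (h : α ∈ Dset β ε) (m : ℤ) : ε ≤ |α - β + 2 * Real.pi * m| :=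
  le_trans (le_of_lt h) (circDist_le α β m)

lemma Dset_add_two_pi (β ε : ℝ) {α : ℝ} : α + 2 * Real.pi ∈ Dset β ε ↔ α ∈ Dset β ε := by
  simp [Dset, circDist_add_two_pi]

def intg (n : ℤ) (β : ℝ) (α : ℝ) : ℂ :=
  Complex.exp (Complex.I * (n : ℂ) * (α : ℂ)) /
    (Complex.exp (Complex.I * (α : ℂ)) - Complex.exp (Complex.I * (β : ℂ)))

lemma intg_periodic (n : ℤ) (β : ℝ) (α : ℝ) : intg n β (α + 2 * Real.pi) = intg n β α := by
  unfold intg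
  push_cast
  have h1 : Complex.I * (n:ℂ) * ((α:ℂ) + 2 * Real.pi)
      = Complex.I * n * α + (n:ℂ) * (2 * Real.pi * Complex.I) := by ring
  have h2 : Complex.I * ((α:ℂ) + 2 * Real.pi)
      = Complex.I * α + (1:ℤ) * (2 * Real.pi * Complex.I) := by push_cast; ring
  rw [h1, h2, Complex.exp_add, Complex.exp_add, Complex.exp_int_mul_two_pi_mul_I,
    Complex.exp_int_mul_two_pi_mul_I, mul_one, mul_one]

lemma denom_ne_zero {β ε : ℝ} (hε : 0 < ε) {α : ℝ}
    (h : ∀ m : ℤ, ε ≤ |α - β + 2 * Real.pi * m|) :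
    Complex.exp (Complex.I * (α : ℂ)) - Complex.exp (Complex.I * (β : ℂ)) ≠ 0 := by
  rw [sub_ne_zero]
  intro hc
  obtain ⟨m, hm⟩ := Complex.exp_eq_exp_iff_exists_int.1 hc
  have : (α : ℂ) = (β : ℂ) + (m : ℂ) * (2 * Real.pi) := by
    have := hm
    field_simp at this ⊢
    have hI := Complex.I_ne_zero
    have h2 : Complex.I * α = Complex.I * (β + m * (2 * Real.pi)) := by
      rw [this]; ring
    linear_combination mul_left_cancel₀ hI h2
  have hre : α = β + m * (2 * Real.pi) := by exact_mod_cast this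
  have := h (-m)
  rw [hre] at this
  push_cast at this
  have h0 : β + (m:ℝ) * (2 * Real.pi) - β + 2 * Real.pi * (-m:ℝ) = 0 := by push_cast; ring
  rw [h0, abs_zero] at this
  linarith

lemma integrableOn_piece {β ε : ℝ} (hε : 0 < ε) (n : ℤ) (x y : ℝ) :
    IntegrableOn (intg n β) (Ioc x y ∩ Dset β ε) := by
  have hclosed : IsClosed (⋂ m : ℤ, {α : ℝ | ε ≤ |α - β + 2 * Real.pi * m|}) :=
    isClosed_iInter fun m =>
      isClosed_le continuous_const ((continuous_id.sub continuous_const |>.add continuous_const).abs)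
  set K : Set ℝ := Icc x y ∩ (⋂ m : ℤ, {α : ℝ | ε ≤ |α - β + 2 * Real.pi * m|}) with hK
  have hKcompact : IsCompact K := isCompact_Icc.inter_right hclosed
  have hcont : ContinuousOn (intg n β) K := by
    apply ContinuousOn.div
    · exact (Complex.continuous_exp.comp (by continuity)).continuousOn
    · exact (Complex.continuous_exp.comp (by continuity) |>.sub continuous_const).continuousOn
    · intro α hα
      refine denom_ne_zero hε fun m => ?_
      exact (Set.mem_iInter.1 hα.2 m)
  have hint : IntegrableOn (intg n β) K := hcont.integrableOn_compact hKcompact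
  refine hint.mono_set fun α hα => ?_
  refine ⟨Ioc_subset_Icc_self hα.1, Set.mem_iInter.2 fun m => Dset_mem_ge hα.2 m⟩

lemma shift_integral (g : ℝ → ℂ) (A : Set ℝ) (c : ℝ) :
    ∫ x in A, g x = ∫ x in (fun y : ℝ => y + c) ⁻¹' A, g (x + c) := by
  rw [← (measurePreserving_add_right volume c).setIntegral_preimage_emb
    (measurableEmbedding_addRight c)]

lemma periodize_aux {β ε : ℝ} (hε : 0 < ε) (n : ℤ) {b a : ℝ} (hb1 : b ≤ a)
    (hb2 : a ≤ b + 2 * Real.pi) :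
    ∫ x in Ioc b (b + 2 * Real.pi) ∩ Dset β ε, intg n β x
      = ∫ x in Ioc a (a + 2 * Real.pi) ∩ Dset β ε, intg n β x := by
  have hπ := Real.pi_pos
  have hb2' : b + 2 * Real.pi ≤ a + 2 * Real.pi := by linarith
  have hpi : a + 2 * Real.pi = a + 2 * Real.pi := rfl
  -- translation of the left chunk
  have hshift : ∫ x in Ioc b a ∩ Dset β ε, intg n β x
      = ∫ x in Ioc (b + 2 * Real.pi) (a + 2 * Real.pi) ∩ Dset β ε, intg n β x := by
    rw [shift_integral (intg n β) (Ioc b a ∩ Dset β ε) (-(2 * Real.pi))]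
    have hset : (fun y : ℝ => y + -(2 * Real.pi)) ⁻¹' (Ioc b a ∩ Dset β ε)
        = Ioc (b + 2 * Real.pi) (a + 2 * Real.pi) ∩ Dset β ε := by
      ext x
      simp only [Set.mem_preimage, Set.mem_inter_iff, Set.mem_Ioc, Set.mem_Ioc]
      constructor
      · rintro ⟨⟨h1, h2⟩, h3⟩
        refine ⟨⟨by linarith, by linarith⟩, ?_⟩
        have := (Dset_add_two_pi β ε (α := x + -(2 * Real.pi))).2 h3
        simpa using this
      · rintro ⟨⟨h1, h2⟩, h3⟩
        refine ⟨⟨by linarith, by linarith⟩, ?_⟩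
        rw [← Dset_add_two_pi β ε]
        simpa using h3
    rw [hset]
    apply setIntegral_congr_fun ((measurableSet_Ioc).inter (measurableSet_Dset β ε))
    intro x _
    have := intg_periodic n β (x + -(2 * Real.pi))
    simpa using this.symm
  have hmeas : ∀ u v : ℝ, MeasurableSet (Ioc u v ∩ Dset β ε) := fun u v =>
    measurableSet_Ioc.inter (measurableSet_Dset β ε)
  have hL : Ioc b (b + 2 * Real.pi) ∩ Dset β ε
      = (Ioc b a ∩ Dset β ε) ∪ (Ioc a (b + 2 * Real.pi) ∩ Dset β ε) := by
    rw [← Set.union_inter_distrib_right, Ioc_union_Ioc_eq_Ioc hb1 hb2]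
  have hR : Ioc a (a + 2 * Real.pi) ∩ Dset β ε
      = (Ioc a (b + 2 * Real.pi) ∩ Dset β ε) ∪ (Ioc (b + 2 * Real.pi) (a + 2 * Real.pi) ∩ Dset β ε) := by
    rw [← Set.union_inter_distrib_right, Ioc_union_Ioc_eq_Ioc hb2 hb2']
  have hdL : Disjoint (Ioc b a ∩ Dset β ε) (Ioc a (b + 2 * Real.pi) ∩ Dset β ε) :=
    (Set.Ioc_disjoint_Ioc_of_le le_rfl).mono Set.inter_subset_left Set.inter_subset_left
  have hdR : Disjoint (Ioc a (b + 2 * Real.pi) ∩ Dset β ε)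
      (Ioc (b + 2 * Real.pi) (a + 2 * Real.pi) ∩ Dset β ε) :=
    (Set.Ioc_disjoint_Ioc_of_le le_rfl).mono Set.inter_subset_left Set.inter_subset_left
  rw [hpi] at hR hdR hshift
  rw [hL, hR]
  rw [setIntegral_union hdL (hmeas _ _) (integrableOn_piece hε n _ _) (integrableOn_piece hε n _ _),
    setIntegral_union hdR (hmeas _ _) (integrableOn_piece hε n _ _) (integrableOn_piece hε n _ _),
    hshift]
  ring

lemma periodize {β ε : ℝ} (hε : 0 < ε) (n : ℤ) (hβ : β ∈ Ioc (-Real.pi) Real.pi) :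
    ∫ x in Ioc (-Real.pi) Real.pi ∩ Dset β ε, intg n β x
      = ∫ x in Ioc (β - Real.pi) (β + Real.pi) ∩ Dset β ε, intg n β x := by
  have hπ := Real.pi_pos
  obtain ⟨hβ1, hβ2⟩ := hβ
  have hb : β - Real.pi + 2 * Real.pi = β + Real.pi := by ring
  rcases le_or_gt β 0 with h | h
  · rw [← hb, periodize_aux (β := β) hε n (by linarith : β - Real.pi ≤ -Real.pi)
      (by linarith : -Real.pi ≤ β - Real.pi + 2 * Real.pi)]
    congr 2
    ring
  · have := periodize_aux (β := β) hε n (by linarith : -Real.pi ≤ β - Real.pi)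
      (by linarith : β - Real.pi ≤ -Real.pi + 2 * Real.pi)
    rw [show -Real.pi + 2 * Real.pi = Real.pi by ring, hb] at this
    exact this

lemma exp_ne_one {θ : ℝ} (h0 : θ ≠ 0) (h : |θ| ≤ Real.pi) :
    Complex.exp (Complex.I * (θ : ℂ)) ≠ 1 := by
  intro hc
  obtain ⟨m, hm⟩ := Complex.exp_eq_one_iff.1 hc
  have h2 : (θ : ℂ) = (m : ℂ) * (2 * Real.pi) := by
    have hI := Complex.I_ne_zero
    have : Complex.I * θ = Complex.I * ((m : ℂ) * (2 * Real.pi)) := by rw [hm]; ring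
    exact mul_left_cancel₀ hI this
  have h3 : θ = m * (2 * Real.pi) := by exact_mod_cast h2
  have hπ := Real.pi_pos
  rcases eq_or_ne m 0 with rfl | hm0
  · simp at h3; exact h0 h3
  · have h1 : (1:ℝ) ≤ |(m:ℝ)| := by exact_mod_cast Int.one_le_abs hm0
    rw [h3] at h
    rw [abs_mul, abs_of_pos (by positivity : (0:ℝ) < 2 * Real.pi)] at h
    nlinarith

lemma continuousOn_intg0 (n : ℤ) {s : Set ℝ} (hs : ∀ θ ∈ s, θ ≠ 0 ∧ |θ| ≤ Real.pi) :
    ContinuousOn (intg n 0) s := by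
  apply ContinuousOn.div
  · exact (Complex.continuous_exp.comp (by continuity)).continuousOn
  · exact (Complex.continuous_exp.comp (by continuity) |>.sub continuous_const).continuousOn
  · intro θ hθ
    have : Complex.exp (Complex.I * ((0:ℝ):ℂ)) = 1 := by norm_num
    rw [this, sub_ne_zero]
    exact exp_ne_one (hs θ hθ).1 (hs θ hθ).2

lemma intg_shift (n : ℤ) (β θ : ℝ) :
    intg n β (θ + β) = Complex.exp (Complex.I * ((n : ℂ) - 1) * (β : ℂ)) * intg n 0 θ := by
  unfold intg
  push_cast
  have h1 : Complex.I * (n:ℂ) * ((θ:ℂ) + β) = Complex.I * n * θ + Complex.I * n * β := by ring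
  have h2 : Complex.I * ((θ:ℂ) + β) = Complex.I * θ + Complex.I * β := by ring
  rw [h1, h2, Complex.exp_add, Complex.exp_add]
  simp only [Complex.ofReal_zero, mul_zero, Complex.exp_zero]
  have hden : Complex.exp (Complex.I * θ) * Complex.exp (Complex.I * β) - Complex.exp (Complex.I * β)
      = (Complex.exp (Complex.I * θ) - 1) * Complex.exp (Complex.I * β) := by ring
  rw [hden, mul_div_mul_comm]
  rw [← Complex.exp_sub]
  ring_nf

lemma reduction (n : ℤ) {β : ℝ} (hβ : β ∈ Ioc (-Real.pi) Real.pi) {ε : ℝ}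
    (h1 : 0 < ε) (h2 : ε < Real.pi) :
    ∫ α in pvSet β ε, intg n β α
      = Complex.exp (Complex.I * ((n:ℂ) - 1) * (β:ℂ)) *
        ((∫ θ in (-Real.pi)..(-ε), intg n 0 θ) + ∫ θ in ε..Real.pi, intg n 0 θ) := by
  have hπ := Real.pi_pos
  have hset : pvSet β ε = Ioc (-Real.pi) Real.pi ∩ Dset β ε := rfl
  rw [hset, periodize h1 n hβ, shift_integral (intg n β) _ β]
  have hpre : (fun y : ℝ => y + β) ⁻¹' (Ioc (β - Real.pi) (β + Real.pi) ∩ Dset β ε)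
      = Ioo (-Real.pi) (-ε) ∪ Ioc ε Real.pi := by
    ext θ
    simp only [Set.mem_preimage, Set.mem_inter_iff, Set.mem_Ioc, Set.mem_union, Set.mem_Ioo]
    have hcd : θ + β ∈ Dset β ε ↔ ε < circDist θ 0 := by
      have h := circDist_add_right θ 0 β
      rw [zero_add] at h
      simp [Dset, h]
    rw [hcd]
    constructor
    · rintro ⟨⟨ha, hb⟩, hc⟩
      have hIoc : θ ∈ Ioc (-Real.pi) Real.pi := ⟨by linarith, by linarith⟩
      rw [circDist_self_zero hIoc] at hc
      rcases lt_abs.1 hc with h | h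
      · exact Or.inr ⟨h, hIoc.2⟩
      · exact Or.inl ⟨hIoc.1, by linarith⟩
    · rintro (⟨ha, hb⟩ | ⟨ha, hb⟩)
      · have hIoc : θ ∈ Ioc (-Real.pi) Real.pi := ⟨ha, by linarith⟩
        rw [circDist_self_zero hIoc]
        exact ⟨⟨by linarith, by linarith⟩, lt_abs.2 (Or.inr (by linarith))⟩
      · have hIoc : θ ∈ Ioc (-Real.pi) Real.pi := ⟨by linarith, hb⟩
        rw [circDist_self_zero hIoc]
        exact ⟨⟨by linarith, by linarith⟩, lt_abs.2 (Or.inl ha)⟩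
  rw [hpre]
  have hptw : ∀ θ : ℝ, intg n β (θ + β)
      = Complex.exp (Complex.I * ((n:ℂ) - 1) * (β:ℂ)) * intg n 0 θ := intg_shift n β
  simp only [hptw]
  rw [integral_const_mul]
  congr 1
  have hi1 : IntegrableOn (intg n 0) (Ioo (-Real.pi) (-ε)) := by
    refine ((continuousOn_intg0 n (s := Icc (-Real.pi) (-ε)) ?_).integrableOn_compact
      isCompact_Icc).mono_set Ioo_subset_Icc_self
    rintro θ ⟨hθ1, hθ2⟩
    exact ⟨by linarith, abs_le.2 ⟨hθ1, by linarith⟩⟩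
  have hi2 : IntegrableOn (intg n 0) (Ioc ε Real.pi) := by
    refine ((continuousOn_intg0 n (s := Icc ε Real.pi) ?_).integrableOn_compact
      isCompact_Icc).mono_set Ioc_subset_Icc_self
    rintro θ ⟨hθ1, hθ2⟩
    exact ⟨by linarith, abs_le.2 ⟨by linarith, hθ2⟩⟩
  have hdisj : Disjoint (Ioo (-Real.pi) (-ε)) (Ioc ε Real.pi) := by
    rw [Set.disjoint_left]
    rintro θ ⟨_, hb⟩ ⟨hc, _⟩
    linarith
  rw [setIntegral_union hdisj measurableSet_Ioc hi1 hi2]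
  congr 1
  · rw [intervalIntegral.integral_of_le (by linarith : -Real.pi ≤ -ε),
      MeasureTheory.integral_Ioc_eq_integral_Ioo]
  · rw [intervalIntegral.integral_of_le (by linarith : ε ≤ Real.pi)]

def Fad (t : ℝ) : ℂ := -Complex.I * Complex.log (1 - Complex.exp (-Complex.I * (t : ℂ)))

lemma cos_lt_one {θ : ℝ} (h0 : θ ≠ 0) (h : |θ| ≤ Real.pi) : Real.cos θ < 1 := by
  refine lt_of_le_of_ne (Real.cos_le_one θ) fun hc => ?_
  obtain ⟨m, hm⟩ := (Real.cos_eq_one_iff θ).1 hc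
  have hπ := Real.pi_pos
  rcases eq_or_ne m 0 with rfl | hm0
  · simp at hm; exact h0 hm.symm
  · have h1 : (1:ℝ) ≤ |(m:ℝ)| := by exact_mod_cast Int.one_le_abs hm0
    rw [← hm, abs_mul, abs_of_pos (by positivity : (0:ℝ) < 2 * Real.pi)] at h
    nlinarith

lemma one_sub_exp_mem_slitPlane {θ : ℝ} (h0 : θ ≠ 0) (h : |θ| ≤ Real.pi) :
    1 - Complex.exp (-Complex.I * (θ : ℂ)) ∈ Complex.slitPlane := by
  rw [Complex.mem_slitPlane_iff]
  left
  have harg : -Complex.I * (θ : ℂ) = ((-θ : ℝ) : ℂ) * Complex.I := by push_cast; ring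
  rw [Complex.sub_re, harg, Complex.exp_ofReal_mul_I_re, Real.cos_neg, Complex.one_re]
  have := cos_lt_one h0 h
  linarith

lemma hasDerivAt_Fad {θ : ℝ} (h0 : θ ≠ 0) (h : |θ| ≤ Real.pi) :
    HasDerivAt Fad ((Complex.exp (Complex.I * (θ : ℂ)) - 1)⁻¹) θ := by
  have hslit := one_sub_exp_mem_slitPlane h0 h
  have hne : 1 - Complex.exp (-Complex.I * (θ : ℂ)) ≠ 0 := Complex.slitPlane_ne_zero hslit
  have hinner : HasDerivAt (fun t : ℝ => 1 - Complex.exp (-Complex.I * (t : ℂ)))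
      (Complex.I * Complex.exp (-Complex.I * (θ : ℂ))) θ := by
    have h1 : HasDerivAt (fun t : ℝ => -Complex.I * (t : ℂ)) (-Complex.I) θ := by
      simpa using (Complex.ofRealCLM.hasDerivAt (x := θ)).const_mul (-Complex.I)
    have h2 := (Complex.hasDerivAt_exp (-Complex.I * (θ : ℂ))).comp θ h1
    have h3 := h2.const_sub 1
    refine h3.congr_deriv ?_
    ring
  have hlog := (Complex.hasDerivAt_log hslit).comp θ hinner
  have := hlog.const_mul (-Complex.I)
  refine this.congr_deriv ?_
  symm
  have hexp : Complex.exp (Complex.I * (θ : ℂ)) * Complex.exp (-Complex.I * (θ : ℂ)) = 1 := by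
    rw [← Complex.exp_add]; ring_nf; exact Complex.exp_zero
  have hne2 : Complex.exp (Complex.I * (θ : ℂ)) - 1 ≠ 0 := sub_ne_zero.2 (exp_ne_one h0 h)
  have he : Complex.exp (-Complex.I * (θ:ℂ)) ≠ 0 := Complex.exp_ne_zero _
  have key : 1 - Complex.exp (-Complex.I * (θ:ℂ))
      = Complex.exp (-Complex.I * (θ:ℂ)) * (Complex.exp (Complex.I * (θ:ℂ)) - 1) := by
    linear_combination -hexp
  rw [key, mul_inv]
  field_simp
  have hI2 := Complex.I_sq
  linear_combination hI2

lemma Fad_pi_eq : Fad Real.pi = Fad (-Real.pi) := by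
  unfold Fad
  congr 2
  · have h1 : -Complex.I * ((Real.pi : ℝ) : ℂ) = -(Real.pi * Complex.I) := by push_cast; ring
    have h2 : -Complex.I * (((-Real.pi : ℝ)) : ℂ) = Real.pi * Complex.I := by push_cast; ring
    rw [h1, h2, Complex.exp_neg, Complex.exp_pi_mul_I]
    norm_num

lemma arg_one_sub_exp {ε : ℝ} (h1 : 0 < ε) (h2 : ε < Real.pi) :
    Complex.arg (1 - Complex.exp (-Complex.I * ((-ε : ℝ) : ℂ))) = ε / 2 - Real.pi / 2 := by
  have hπ := Real.pi_pos
  have hs : 0 < Real.sin (ε / 2) := Real.sin_pos_of_pos_of_lt_pi (by linarith) (by linarith)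
  have hz : 1 - Complex.exp (-Complex.I * ((-ε : ℝ) : ℂ))
      = ((2 * Real.sin (ε / 2) : ℝ) : ℂ) *
        (((Real.cos (ε / 2 - Real.pi / 2) : ℝ) : ℂ) +
          ((Real.sin (ε / 2 - Real.pi / 2) : ℝ) : ℂ) * Complex.I) := by
    have harg : -Complex.I * ((-ε : ℝ) : ℂ) = ((ε : ℝ) : ℂ) * Complex.I := by push_cast; ring
    rw [harg]
    apply Complex.ext
    · simp only [Complex.sub_re, Complex.one_re, Complex.exp_ofReal_mul_I_re, Complex.add_re,
        Complex.mul_re, Complex.ofReal_re, Complex.ofReal_im, Complex.I_re, Complex.I_im,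
        Complex.add_im, Complex.mul_im]
      rw [Real.cos_sub_pi_div_two]
      have hcos : Real.cos ε = 1 - 2 * Real.sin (ε / 2) ^ 2 := by
        have hc := Real.cos_two_mul (ε / 2)
        rw [show 2 * (ε / 2) = ε by ring] at hc
        have h2 : Real.sin (ε/2)^2 + Real.cos (ε/2)^2 = 1 := Real.sin_sq_add_cos_sq (ε/2)
        nlinarith
      nlinarith [hcos]
    · simp only [Complex.sub_im, Complex.one_im, Complex.exp_ofReal_mul_I_im, Complex.add_im,
        Complex.mul_im, Complex.ofReal_re, Complex.ofReal_im, Complex.I_re, Complex.I_im,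
        Complex.add_re, Complex.mul_re]
      rw [Real.sin_sub_pi_div_two]
      have hsin : Real.sin ε = 2 * Real.sin (ε / 2) * Real.cos (ε / 2) := by
        have := Real.sin_two_mul (ε / 2)
        rw [show 2 * (ε / 2) = ε by ring] at this
        exact this
      nlinarith [hsin]
  rw [hz, Complex.arg_real_mul _ (by positivity : (0:ℝ) < 2 * Real.sin (ε / 2)),
    Complex.ofReal_cos, Complex.ofReal_sin,
    Complex.arg_cos_add_sin_mul_I
      (⟨by linarith, by linarith⟩ : ε / 2 - Real.pi / 2 ∈ Set.Ioc (-Real.pi) Real.pi)]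

lemma Fad_jump {ε : ℝ} (h1 : 0 < ε) (h2 : ε < Real.pi) :
    Fad (-ε) - Fad ε = (ε : ℂ) - (Real.pi : ℂ) := by
  have hπ := Real.pi_pos
  set z := 1 - Complex.exp (-Complex.I * ((-ε : ℝ) : ℂ)) with hzdef
  have hconj : 1 - Complex.exp (-Complex.I * ((ε : ℝ) : ℂ)) = starRingEnd ℂ z := by
    rw [hzdef]
    rw [map_sub, map_one]
    congr 1
    rw [← Complex.exp_conj]
    congr 1
    rw [map_mul, map_neg, Complex.conj_I]
    rw [Complex.conj_ofReal]
    push_cast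
    ring
  have harg : z.arg = ε / 2 - Real.pi / 2 := arg_one_sub_exp h1 h2
  have hargne : z.arg ≠ Real.pi := by rw [harg]; intro hc; linarith
  unfold Fad
  rw [hconj, Complex.log_conj _ hargne]
  have : Complex.log z - starRingEnd ℂ (Complex.log z)
      = (2 * (Complex.log z).im : ℝ) * Complex.I := Complex.sub_conj _
  rw [show -Complex.I * Complex.log z - -Complex.I * starRingEnd ℂ (Complex.log z)
      = -Complex.I * (Complex.log z - starRingEnd ℂ (Complex.log z)) by ring, this,
    Complex.log_im, harg]
  push_cast
  rw [show -Complex.I * ((2:ℂ) * ((ε:ℂ)/2 - (Real.pi:ℂ)/2) * Complex.I)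
      = -(Complex.I * Complex.I) * (2 * ((ε:ℂ)/2 - (Real.pi:ℂ)/2)) by ring, Complex.I_mul_I]
  ring

lemma continuousOn_inv_den {s : Set ℝ} (hs : ∀ θ ∈ s, θ ≠ 0 ∧ |θ| ≤ Real.pi) :
    ContinuousOn (fun θ : ℝ => (Complex.exp (Complex.I * (θ : ℂ)) - 1)⁻¹) s := by
  apply ContinuousOn.inv₀
  · exact (Complex.continuous_exp.comp (by continuity) |>.sub continuous_const).continuousOn
  · intro θ hθ
    exact sub_ne_zero.2 (exp_ne_one (hs θ hθ).1 (hs θ hθ).2)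

lemma seg_pos (n : ℤ) (q : ℝ → ℂ) (hq : Continuous q)
    (hid : ∀ θ : ℝ, Complex.exp (Complex.I * (n:ℂ) * (θ:ℂ)) - 1
      = q θ * (Complex.exp (Complex.I * (θ:ℂ)) - 1))
    {a b : ℝ} (hab : a ≤ b) (hs : ∀ θ ∈ Icc a b, θ ≠ 0 ∧ |θ| ≤ Real.pi) :
    (∫ θ in a..b, intg n 0 θ) = (∫ θ in a..b, q θ) + (Fad b - Fad a) := by
  have huIcc : Set.uIcc a b = Icc a b := Set.uIcc_of_le hab
  have hcont := continuousOn_inv_den hs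
  have hint : IntervalIntegrable (fun θ : ℝ => (Complex.exp (Complex.I * (θ:ℂ)) - 1)⁻¹)
      volume a b := by
    apply ContinuousOn.intervalIntegrable
    rwa [huIcc]
  have hqint : IntervalIntegrable q volume a b := hq.intervalIntegrable a b
  have hcongr : Set.EqOn (intg n 0)
      (fun θ : ℝ => q θ + (Complex.exp (Complex.I * (θ:ℂ)) - 1)⁻¹) (Set.uIcc a b) := by
    intro θ hθ
    rw [huIcc] at hθ
    obtain ⟨h0, habs⟩ := hs θ hθ
    have hne : Complex.exp (Complex.I * (θ:ℂ)) - 1 ≠ 0 := sub_ne_zero.2 (exp_ne_one h0 habs)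
    unfold intg
    simp only [Complex.ofReal_zero, mul_zero, Complex.exp_zero]
    field_simp
    linear_combination hid θ
  rw [intervalIntegral.integral_congr hcongr, intervalIntegral.integral_add hqint hint]
  congr 1
  exact intervalIntegral.integral_eq_sub_of_hasDerivAt
    (fun θ hθ => by
      rw [huIcc] at hθ
      exact hasDerivAt_Fad (hs θ hθ).1 (hs θ hθ).2) hint

lemma key (n : ℤ) (q : ℝ → ℂ) (hq : Continuous q)
    (hid : ∀ θ : ℝ, Complex.exp (Complex.I * (n:ℂ) * (θ:ℂ)) - 1
      = q θ * (Complex.exp (Complex.I * (θ:ℂ)) - 1)) :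
    Tendsto (fun ε : ℝ => (∫ θ in (-Real.pi)..(-ε), intg n 0 θ) + ∫ θ in ε..Real.pi, intg n 0 θ)
      (nhdsWithin 0 (Ioi 0))
      (nhds ((∫ θ in (-Real.pi)..Real.pi, q θ) - (Real.pi : ℂ))) := by
  have hπ := Real.pi_pos
  set φ : ℝ → ℂ := fun x => ∫ θ in (0:ℝ)..x, q θ with hφ
  have hφcont : Continuous φ :=
    intervalIntegral.continuous_primitive (fun a b => hq.intervalIntegrable a b) 0
  have h2 : Tendsto (fun ε : ℝ =>
      (∫ θ in (-Real.pi)..Real.pi, q θ) - (φ ε - φ (-ε)) + ((ε : ℂ) - (Real.pi : ℂ)))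
      (nhdsWithin 0 (Ioi 0))
      (nhds ((∫ θ in (-Real.pi)..Real.pi, q θ) - (Real.pi : ℂ))) := by
    have hc : Continuous (fun ε : ℝ =>
        (∫ θ in (-Real.pi)..Real.pi, q θ) - (φ ε - φ (-ε)) + ((ε : ℂ) - (Real.pi : ℂ))) :=
      (continuous_const.sub (hφcont.sub (hφcont.comp continuous_neg))).add
        (Complex.continuous_ofReal.sub continuous_const)
    have h0 := (hc.tendsto 0).mono_left (nhdsWithin_le_nhds (s := Ioi (0:ℝ)))
    have hval : (∫ θ in (-Real.pi)..Real.pi, q θ) - (φ 0 - φ (-0)) + (((0:ℝ):ℂ) - (Real.pi:ℂ))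
        = (∫ θ in (-Real.pi)..Real.pi, q θ) - (Real.pi : ℂ) := by
      rw [neg_zero, Complex.ofReal_zero]
      ring
    rwa [hval] at h0
  apply h2.congr'
  filter_upwards [Ioo_mem_nhdsGT_of_mem (⟨le_refl 0, hπ⟩ : (0:ℝ) ∈ Ico 0 Real.pi)] with ε hε
  obtain ⟨h1, h2'⟩ := hε
  have hseg1 : (∫ θ in (-Real.pi)..(-ε), intg n 0 θ)
      = (∫ θ in (-Real.pi)..(-ε), q θ) + (Fad (-ε) - Fad (-Real.pi)) := by
    apply seg_pos n q hq hid (by linarith)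
    rintro θ ⟨ha, hb⟩
    exact ⟨by intro hc; rw [hc] at hb; linarith, abs_le.2 ⟨ha, by linarith⟩⟩
  have hseg2 : (∫ θ in ε..Real.pi, intg n 0 θ)
      = (∫ θ in ε..Real.pi, q θ) + (Fad Real.pi - Fad ε) := by
    apply seg_pos n q hq hid (by linarith)
    rintro θ ⟨ha, hb⟩
    exact ⟨by intro hc; rw [hc] at ha; linarith, abs_le.2 ⟨by linarith, hb⟩⟩
  have hsplit : (∫ θ in (-Real.pi)..(-ε), q θ) + (∫ θ in (-ε)..ε, q θ)
      + (∫ θ in ε..Real.pi, q θ) = ∫ θ in (-Real.pi)..Real.pi, q θ := by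
    rw [intervalIntegral.integral_add_adjacent_intervals (hq.intervalIntegrable _ _)
      (hq.intervalIntegrable _ _), intervalIntegral.integral_add_adjacent_intervals
      (hq.intervalIntegrable _ _) (hq.intervalIntegrable _ _)]
  have hmid : (∫ θ in (-ε)..ε, q θ) = φ ε - φ (-ε) := by
    rw [hφ]
    rw [← intervalIntegral.integral_add_adjacent_intervals (a := -ε) (b := 0) (c := ε)
      (hq.intervalIntegrable _ _) (hq.intervalIntegrable _ _),
      intervalIntegral.integral_symm]
    ring
  rw [hseg1, hseg2]
  linear_combination -Fad_jump h1 h2' - hsplit + hmid - Fad_pi_eq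

lemma integral_exp_int (m : ℤ) (hm : m ≠ 0) :
    (∫ θ in (-Real.pi)..Real.pi, Complex.exp (Complex.I * (m:ℂ) * (θ:ℂ))) = 0 := by
  have hc : Complex.I * (m:ℂ) ≠ 0 :=
    mul_ne_zero Complex.I_ne_zero (by exact_mod_cast (Int.cast_ne_zero (α := ℂ)).2 hm)
  have : (∫ θ in (-Real.pi)..Real.pi, Complex.exp (Complex.I * (m:ℂ) * (θ:ℂ)))
      = ∫ θ in (-Real.pi)..Real.pi, Complex.exp ((Complex.I * (m:ℂ)) * (θ:ℂ)) := by
    congr 1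
  rw [this, integral_exp_mul_complex hc]
  have heq : Complex.I * (m:ℂ) * ((Real.pi : ℝ) : ℂ)
      = Complex.I * (m:ℂ) * (((-Real.pi : ℝ)) : ℂ) + (m:ℂ) * (2 * (Real.pi:ℂ) * Complex.I) := by
    push_cast; ring
  rw [heq, Complex.exp_add, Complex.exp_int_mul_two_pi_mul_I, mul_one, sub_self, zero_div]

lemma exp_pow (k : ℕ) (θ : ℝ) :
    Complex.exp (Complex.I * (k:ℂ) * (θ:ℂ)) = Complex.exp (Complex.I * (θ:ℂ)) ^ k := by
  rw [← Complex.exp_nat_mul]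
  congr 1; ring

lemma q1_spec (n : ℤ) (hn : 1 ≤ n) :
    ∃ q : ℝ → ℂ, Continuous q ∧
      (∀ θ : ℝ, Complex.exp (Complex.I * (n:ℂ) * (θ:ℂ)) - 1
        = q θ * (Complex.exp (Complex.I * (θ:ℂ)) - 1)) ∧
      (∫ θ in (-Real.pi)..Real.pi, q θ) = 2 * (Real.pi : ℂ) := by
  set N := n.toNat with hN
  have hNn : (N : ℤ) = n := Int.toNat_of_nonneg (by linarith)
  refine ⟨fun θ => ∑ k ∈ Finset.range N, Complex.exp (Complex.I * (k:ℂ) * (θ:ℂ)), ?_, ?_, ?_⟩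
  · exact continuous_finset_sum _ fun k _ => Complex.continuous_exp.comp (by continuity)
  · intro θ
    have hgeo := geom_sum_mul (Complex.exp (Complex.I * (θ:ℂ))) N
    have hexp : Complex.exp (Complex.I * (n:ℂ) * (θ:ℂ))
        = Complex.exp (Complex.I * (θ:ℂ)) ^ N := by
      rw [← hNn]; push_cast; exact exp_pow N θ
    rw [hexp]
    rw [← hgeo]
    congr 1
    exact Finset.sum_congr rfl fun k _ => (exp_pow k θ).symm
  · beta_reduce
    rw [intervalIntegral.integral_finset_sum
      (fun (k : ℕ) (_ : k ∈ Finset.range N) =>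
        Continuous.intervalIntegrable
          (Continuous.cexp (by continuity :
            Continuous fun θ : ℝ => Complex.I * (k:ℂ) * (θ:ℂ))) _ _)]
    have hN1 : 0 ∈ Finset.range N := by
      simp only [Finset.mem_range]
      omega
    rw [Finset.sum_eq_single_of_mem 0 hN1]
    · norm_num
      ring
    · intro k _ hk
      have := integral_exp_int (k : ℤ) (by exact_mod_cast hk)
      push_cast at this ⊢
      exact this

lemma q2_spec (n : ℤ) (hn : n ≤ 0) :
    ∃ q : ℝ → ℂ, Continuous q ∧
      (∀ θ : ℝ, Complex.exp (Complex.I * (n:ℂ) * (θ:ℂ)) - 1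
        = q θ * (Complex.exp (Complex.I * (θ:ℂ)) - 1)) ∧
      (∫ θ in (-Real.pi)..Real.pi, q θ) = 0 := by
  set M := (-n).toNat with hM
  have hMn : (M : ℤ) = -n := Int.toNat_of_nonneg (by linarith)
  refine ⟨fun θ => -∑ k ∈ Finset.range M,
    Complex.exp (Complex.I * ((n:ℂ) + (k:ℂ)) * (θ:ℂ)), ?_, ?_, ?_⟩
  · exact (continuous_finset_sum _ fun k _ => Complex.continuous_exp.comp (by continuity)).neg
  · intro θ
    have hgeo := geom_sum_mul (Complex.exp (Complex.I * (θ:ℂ))) M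
    have hsum : ∑ k ∈ Finset.range M, Complex.exp (Complex.I * ((n:ℂ) + (k:ℂ)) * (θ:ℂ))
        = Complex.exp (Complex.I * (n:ℂ) * (θ:ℂ)) *
          ∑ k ∈ Finset.range M, Complex.exp (Complex.I * (θ:ℂ)) ^ k := by
      rw [Finset.mul_sum]
      refine Finset.sum_congr rfl fun k _ => ?_
      rw [← exp_pow, ← Complex.exp_add]
      congr 1; ring
    show Complex.exp (Complex.I * (n:ℂ) * (θ:ℂ)) - 1
      = (-∑ k ∈ Finset.range M, Complex.exp (Complex.I * ((n:ℂ) + (k:ℂ)) * (θ:ℂ)))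
        * (Complex.exp (Complex.I * (θ:ℂ)) - 1)
    have hx : Complex.exp (Complex.I * (n:ℂ) * (θ:ℂ)) *
        Complex.exp (Complex.I * (θ:ℂ)) ^ M = 1 := by
      rw [← exp_pow, ← Complex.exp_add]
      have harg : Complex.I * (n:ℂ) * (θ:ℂ) + Complex.I * (M:ℂ) * (θ:ℂ)
          = (((n:ℂ) + (M:ℂ)) * (Complex.I * (θ:ℂ))) := by ring
      rw [harg]
      have : (n:ℂ) + (M:ℂ) = 0 := by
        have : ((M:ℤ) : ℂ) = ((-n : ℤ) : ℂ) := by rw [hMn]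
        push_cast at this
        rw [this]; ring
      rw [this, zero_mul, Complex.exp_zero]
    rw [hsum]
    linear_combination Complex.exp (Complex.I * (n:ℂ) * (θ:ℂ)) * hgeo + hx
  · beta_reduce
    rw [intervalIntegral.integral_neg, intervalIntegral.integral_finset_sum
      (fun (k : ℕ) (_ : k ∈ Finset.range M) =>
        Continuous.intervalIntegrable
          (Continuous.cexp (by continuity :
            Continuous fun θ : ℝ => Complex.I * ((n:ℂ) + (k:ℂ)) * (θ:ℂ))) _ _)]
    rw [Finset.sum_eq_zero, neg_zero]
    intro k hk
    have hk' : (n : ℤ) + (k : ℤ) ≠ 0 := by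
      simp only [Finset.mem_range] at hk
      omega
    have := integral_exp_int (n + k) hk'
    push_cast at this ⊢
    exact this

/-- Lemma A.3: `(1/π) p.v. ∫_{-π}^{π} e^{inα}/(e^{iα} - e^{iβ}) dα = ± e^{i(n-1)β}`,
with sign `+` for `n ≥ 1` and `-` for `n ≤ 0`. -/
theorem stmt12 (n : ℤ) (β : ℝ) (hβ : β ∈ Ioc (-Real.pi) Real.pi) :
    Tendsto (fun ε : ℝ =>
        (1 / (Real.pi : ℂ)) * ∫ α in pvSet β ε,
          Complex.exp (Complex.I * (n : ℂ) * (α : ℂ)) /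
            (Complex.exp (Complex.I * (α : ℂ)) - Complex.exp (Complex.I * (β : ℂ))))
      (nhdsWithin 0 (Ioi 0))
      (nhds (if 1 ≤ n then Complex.exp (Complex.I * ((n : ℂ) - 1) * (β : ℂ))
        else -Complex.exp (Complex.I * ((n : ℂ) - 1) * (β : ℂ)))) := by
  have hπ := Real.pi_pos
  have hπc : (Real.pi : ℂ) ≠ 0 := by exact_mod_cast Real.pi_ne_zero
  set c := Complex.exp (Complex.I * ((n:ℂ) - 1) * (β:ℂ)) with hc
  by_cases hn : 1 ≤ n
  · obtain ⟨q, hq, hid, hC⟩ := q1_spec n hn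
    rw [if_pos hn]
    have hkey := key n q hq hid
    rw [hC] at hkey
    have htd := (hkey.const_mul c).const_mul ((1:ℂ)/(Real.pi:ℂ))
    have hval : (1/(Real.pi:ℂ)) * (c * (2*(Real.pi:ℂ) - (Real.pi:ℂ))) = c := by
      field_simp
      ring
    rw [hval] at htd
    apply htd.congr'
    filter_upwards [Ioo_mem_nhdsGT_of_mem (⟨le_refl 0, hπ⟩ : (0:ℝ) ∈ Ico 0 Real.pi)] with ε hε
    have := reduction n hβ hε.1 hε.2
    rw [← hc] at this
    rw [← this]
    rfl
  · have hn' : n ≤ 0 := by omega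
    obtain ⟨q, hq, hid, hC⟩ := q2_spec n hn'
    rw [if_neg hn]
    have hkey := key n q hq hid
    rw [hC] at hkey
    have htd := (hkey.const_mul c).const_mul ((1:ℂ)/(Real.pi:ℂ))
    have hval : (1/(Real.pi:ℂ)) * (c * (0 - (Real.pi:ℂ))) = -c := by
      rw [zero_sub]
      field_simp
    rw [hval] at htd
    apply htd.congr'
    filter_upwards [Ioo_mem_nhdsGT_of_mem (⟨le_refl 0, hπ⟩ : (0:ℝ) ∈ Ico 0 Real.pi)] with ε hε
    have := reduction n hβ hε.1 hε.2
    rw [← hc] at this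
    rw [← this]
    rfl
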